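/- For all real numbers a, b > 0 it holds that a·log₂(a) + b·log₂(b) + 2·min(a,b) ≤ (a+b)·log₂(a+b). -/
import Mathlib

private lemma key (a b : ℝ) (ha : 0 < a) (hb : 0 < b) (hab : a ≤ b) :
    a * Real.logb 2 a + b * Real.logb 2 b + 2 * a ≤ (a + b) * Real.logb 2 (a + b) := by
  have hs : (0:ℝ) < a + b := by linarith
  have h1 : (1:ℝ) ≤ Real.logb 2 (a + b) - Real.logb 2 a := by
    rw [← Real.logb_div (ne_of_gt hs) (ne_of_gt ha)]
    rw [Real.le_logb_iff_rpow_le one_lt_two (by positivity)]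
    rw [Real.rpow_one, le_div_iff₀ ha]; linarith
  have h2 : a / b ≤ Real.logb 2 (a + b) - Real.logb 2 b := by
    rw [← Real.logb_div (ne_of_gt hs) (ne_of_gt hb)]
    rw [Real.le_logb_iff_rpow_le one_lt_two (by positivity)]
    have hber := rpow_one_add_le_one_add_mul_self (s := 1) (p := a / b)
      (by norm_num) (by positivity) (by rw [div_le_one hb]; exact hab)
    have : (1:ℝ) + a / b * 1 = (a + b) / b := by field_simp; ring
    rw [this] at hber
    norm_num at hber ⊢
    calc (2:ℝ) ^ (a / b) ≤ (a + b) / b := hber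
      _ ≤ (a + b) / b := le_refl _
  have h2' : a ≤ b * (Real.logb 2 (a + b) - Real.logb 2 b) := by
    rw [← div_le_iff₀' hb]; exact h2
  have h1' : a ≤ a * (Real.logb 2 (a + b) - Real.logb 2 a) :=
    le_mul_of_one_le_right ha.le h1
  nlinarith [h1', h2']

theorem stmt_1 (a b : ℝ) (ha : 0 < a) (hb : 0 < b) :
    a * Real.logb 2 a + b * Real.logb 2 b + 2 * min a b ≤ (a + b) * Real.logb 2 (a + b) := by
  rcases le_total a b with h | h
  · rw [min_eq_left h]; exact key a b ha hb h
  · rw [min_eq_right h, add_comm (a * Real.logb 2 a), add_comm a b]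
    exact key b a hb ha h
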